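/- Let (Σ, μ) be a finite measure space, K bounded measurable, u_j → u in L²(μ) with sup_j ∫ e^{4u_j} dμ < ∞ and ∫ e^{4u} dμ < ∞. Then ∫ K e^{2u_j} dμ → ∫ K e^{2u} dμ. -/

import Mathlib

open MeasureTheory Real Filter

/-- Pointwise mean-value type bound for the exponential. -/
lemma exp_sub_exp_abs_le (s t : ℝ) :
    |Real.exp s - Real.exp t| ≤ |s - t| * (Real.exp s + Real.exp t) := by
  rw [abs_sub_le_iff]
  constructor
  · have h := Real.add_one_le_exp (t - s)
    have he : Real.exp t = Real.exp s * Real.exp (t - s) := by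
      rw [← Real.exp_add]; ring_nf
    nlinarith [Real.exp_pos s, Real.exp_pos t, le_abs_self (s - t), abs_nonneg (s - t)]
  · have h := Real.add_one_le_exp (s - t)
    have he : Real.exp s = Real.exp t * Real.exp (s - t) := by
      rw [← Real.exp_add]; ring_nf
    nlinarith [Real.exp_pos s, Real.exp_pos t, neg_le_abs (s - t), abs_nonneg (s - t)]

/-- `e^{2a} ≤ e^{4a} + 1`. -/
lemma exp_two_le (a : ℝ) : Real.exp (2 * a) ≤ Real.exp (4 * a) + 1 := by
  rcases le_or_gt a 0 with h | h
  · have : Real.exp (2 * a) ≤ 1 := Real.exp_le_one_iff.2 (by linarith)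
    nlinarith [Real.exp_pos (4 * a)]
  · have : Real.exp (2 * a) ≤ Real.exp (4 * a) := Real.exp_le_exp.2 (by linarith)
    linarith

/-- If `u_j → u` in `L²(μ)` with uniformly bounded `∫ e^{4u_j}` and `∫ e^{4u} < ∞`,
and `K` is bounded measurable, then `∫ K e^{2u_j} dμ → ∫ K e^{2u} dμ`. -/
theorem integral_K_exp_tendsto {X : Type*} [MeasurableSpace X] (μ : Measure X)
    [IsFiniteMeasure μ] (K u : X → ℝ) (uj : ℕ → X → ℝ)
    (hK : Measurable K) (C : ℝ) (hKbd : ∀ x, |K x| ≤ C)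
    (hu : Measurable u) (huj : ∀ j, Measurable (uj j))
    (hL2 : Tendsto (fun j => ∫ x, (uj j x - u x) ^ 2 ∂μ) atTop (nhds 0))
    (hL2int : ∀ j, Integrable (fun x => (uj j x - u x) ^ 2) μ)
    (hujint : ∀ j, Integrable (fun x => Real.exp (4 * uj j x)) μ)
    (M : ℝ) (hujbd : ∀ j, ∫ x, Real.exp (4 * uj j x) ∂μ ≤ M)
    (huint : Integrable (fun x => Real.exp (4 * u x)) μ) :
    Tendsto (fun j => ∫ x, K x * Real.exp (2 * uj j x) ∂μ) atTop
      (nhds (∫ x, K x * Real.exp (2 * u x) ∂μ)) := by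
  classical
  set C' : ℝ := max C 0 with hC'
  have hK' : ∀ x, |K x| ≤ C' := fun x => le_trans (hKbd x) (le_max_left _ _)
  have hC'0 : 0 ≤ C' := le_max_right _ _
  set A : ℝ := ∫ x, Real.exp (4 * u x) ∂μ with hA
  have hA0 : 0 ≤ A := integral_nonneg fun x => (Real.exp_pos _).le
  have hM0 : 0 ≤ M :=
    le_trans (integral_nonneg fun x => (Real.exp_pos _).le) (hujbd 0)
  set B : ℝ := 2 * (M + A) with hB
  have hB0 : 0 ≤ B := by positivity
  -- integrability of e^{2u}, e^{2 u_j}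
  have h2u : Integrable (fun x => Real.exp (2 * u x)) μ := by
    refine Integrable.mono' (huint.add (integrable_const 1))
      (((hu.const_mul 2).exp).aestronglyMeasurable) ?_
    filter_upwards with x
    rw [Real.norm_eq_abs, abs_of_pos (Real.exp_pos _)]
    exact exp_two_le (u x)
  have h2uj : ∀ j, Integrable (fun x => Real.exp (2 * uj j x)) μ := by
    intro j
    refine Integrable.mono' ((hujint j).add (integrable_const 1))
      ((((huj j).const_mul 2).exp).aestronglyMeasurable) ?_
    filter_upwards with x
    rw [Real.norm_eq_abs, abs_of_pos (Real.exp_pos _)]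
    exact exp_two_le (uj j x)
  -- integrability of K * e^{...}
  have hKint : ∀ j, Integrable (fun x => K x * Real.exp (2 * uj j x)) μ := fun j =>
    Integrable.bdd_mul (h2uj j) hK.aestronglyMeasurable
      (c := C') (Eventually.of_forall fun x => by rw [Real.norm_eq_abs]; exact hK' x)
  have hKintu : Integrable (fun x => K x * Real.exp (2 * u x)) μ :=
    Integrable.bdd_mul h2u hK.aestronglyMeasurable
      (c := C') (Eventually.of_forall fun x => by rw [Real.norm_eq_abs]; exact hK' x)
  -- the key quantitative bound
  have key : ∀ j,
      |(∫ x, K x * Real.exp (2 * uj j x) ∂μ) - ∫ x, K x * Real.exp (2 * u x) ∂μ| ≤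
        2 * C' * Real.sqrt (∫ x, (uj j x - u x) ^ 2 ∂μ) * Real.sqrt B := by
    intro j
    set f : X → ℝ := fun x => uj j x - u x with hf
    set g : X → ℝ := fun x => Real.exp (2 * uj j x) + Real.exp (2 * u x) with hg
    have hfmeas : Measurable f := (huj j).sub hu
    have hgmeas : Measurable g :=
      (((huj j).const_mul 2).exp).add ((hu.const_mul 2).exp)
    have hg0 : ∀ x, 0 ≤ g x := fun x =>
      add_nonneg (Real.exp_pos _).le (Real.exp_pos _).le
    -- g² is integrable and its integral is ≤ B
    have hgsq_le : ∀ x, g x ^ 2 ≤ 2 * Real.exp (4 * uj j x) + 2 * Real.exp (4 * u x) := by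
      intro x
      have h1 : Real.exp (2 * uj j x) ^ 2 = Real.exp (4 * uj j x) := by
        rw [sq, ← Real.exp_add]; ring_nf
      have h2 : Real.exp (2 * u x) ^ 2 = Real.exp (4 * u x) := by
        rw [sq, ← Real.exp_add]; ring_nf
      have := sq_nonneg (Real.exp (2 * uj j x) - Real.exp (2 * u x))
      simp only [hg]
      nlinarith
    have hg2int : Integrable (fun x => g x ^ 2) μ := by
      refine Integrable.mono' (((hujint j).const_mul 2).add (huint.const_mul 2))
        ((hgmeas.pow_const 2).aestronglyMeasurable) ?_
      filter_upwards with x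
      rw [Real.norm_eq_abs, abs_of_nonneg (sq_nonneg _)]
      exact hgsq_le x
    have hg2B : (∫ x, g x ^ 2 ∂μ) ≤ B := by
      calc (∫ x, g x ^ 2 ∂μ)
          ≤ ∫ x, (2 * Real.exp (4 * uj j x) + 2 * Real.exp (4 * u x)) ∂μ :=
            integral_mono hg2int (((hujint j).const_mul 2).add (huint.const_mul 2))
              fun x => hgsq_le x
        _ = 2 * (∫ x, Real.exp (4 * uj j x) ∂μ) + 2 * (∫ x, Real.exp (4 * u x) ∂μ) := by
            rw [integral_add ((hujint j).const_mul 2) (huint.const_mul 2),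
              integral_const_mul, integral_const_mul]
        _ ≤ 2 * M + 2 * A := by
            have := hujbd j
            simp only [← hA]
            nlinarith
        _ = B := by rw [hB]; ring
    -- MemLp facts
    have hf2 : MemLp f 2 μ :=
      (memLp_two_iff_integrable_sq hfmeas.aestronglyMeasurable).2 (hL2int j)
    have hfabs2 : MemLp (fun x => |f x|) 2 μ := by
      simpa only [Real.norm_eq_abs] using hf2.norm
    have hg2 : MemLp g 2 μ :=
      (memLp_two_iff_integrable_sq hgmeas.aestronglyMeasurable).2 hg2int
    -- integrability of |f| * g
    have hmul : Integrable (fun x => |f x| * g x) μ := by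
      refine Integrable.mono' ((hL2int j).add hg2int)
        ((hfmeas.abs.mul hgmeas).aestronglyMeasurable) ?_
      filter_upwards with x
      rw [Real.norm_eq_abs, abs_of_nonneg (mul_nonneg (abs_nonneg _) (hg0 x))]
      simp only [Pi.add_apply, hf]
      nlinarith [sq_nonneg (|uj j x - u x| - g x), sq_abs (uj j x - u x),
        abs_nonneg (uj j x - u x), hg0 x]
    -- Hölder (Cauchy–Schwarz)
    have hpq : Real.HolderConjugate 2 2 := ⟨by norm_num, by norm_num, by norm_num⟩
    have hofReal : (ENNReal.ofReal (2 : ℝ)) = 2 := by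
      rw [ENNReal.ofReal_eq_ofNat]
    have holder :
        (∫ x, |f x| * g x ∂μ) ≤
          (∫ x, |f x| ^ (2 : ℝ) ∂μ) ^ ((1 : ℝ) / 2) * (∫ x, g x ^ (2 : ℝ) ∂μ) ^ ((1 : ℝ) / 2) := by
      refine integral_mul_le_Lp_mul_Lq_of_nonneg hpq ?_ ?_ ?_ ?_
      · exact Eventually.of_forall fun x => abs_nonneg _
      · exact Eventually.of_forall fun x => hg0 x
      · rw [hofReal]; exact hfabs2
      · rw [hofReal]; exact hg2
    have hrpow : ∀ y : ℝ, y ^ (2 : ℝ) = y ^ 2 := by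
      intro y
      rw [show (2 : ℝ) = ((2 : ℕ) : ℝ) by norm_num, Real.rpow_natCast]
    have hEf : (∫ x, |f x| ^ (2 : ℝ) ∂μ) = ∫ x, (uj j x - u x) ^ 2 ∂μ := by
      refine integral_congr_ae (Eventually.of_forall fun x => ?_)
      simp only [hrpow, sq_abs, hf]
    have hEg : (∫ x, g x ^ (2 : ℝ) ∂μ) = ∫ x, g x ^ 2 ∂μ := by
      refine integral_congr_ae (Eventually.of_forall fun x => ?_)
      simp only [hrpow]
    have holder' :
        (∫ x, |f x| * g x ∂μ) ≤
          Real.sqrt (∫ x, (uj j x - u x) ^ 2 ∂μ) * Real.sqrt (∫ x, g x ^ 2 ∂μ) := by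
      rw [Real.sqrt_eq_rpow, Real.sqrt_eq_rpow, ← hEf, ← hEg]
      exact holder
    -- pointwise bound for the integrand difference
    have hpt : ∀ x,
        |K x * Real.exp (2 * uj j x) - K x * Real.exp (2 * u x)| ≤
          2 * C' * (|f x| * g x) := by
      intro x
      have h1 : |K x * Real.exp (2 * uj j x) - K x * Real.exp (2 * u x)| =
          |K x| * |Real.exp (2 * uj j x) - Real.exp (2 * u x)| := by
        rw [← abs_mul]; ring_nf
      have h2 := exp_sub_exp_abs_le (2 * uj j x) (2 * u x)
      have h3 : |2 * uj j x - 2 * u x| = 2 * |f x| := by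
        rw [show 2 * uj j x - 2 * u x = 2 * (uj j x - u x) by ring, abs_mul, abs_two]
      rw [h1]
      calc |K x| * |Real.exp (2 * uj j x) - Real.exp (2 * u x)|
          ≤ C' * (|2 * uj j x - 2 * u x| * (Real.exp (2 * uj j x) + Real.exp (2 * u x))) := by
            refine mul_le_mul (hK' x) h2 (abs_nonneg _) hC'0
        _ = 2 * C' * (|f x| * g x) := by rw [h3, hg]; ring
    -- put it all together
    calc |(∫ x, K x * Real.exp (2 * uj j x) ∂μ) - ∫ x, K x * Real.exp (2 * u x) ∂μ|
        = |∫ x, (K x * Real.exp (2 * uj j x) - K x * Real.exp (2 * u x)) ∂μ| := by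
          rw [integral_sub (hKint j) hKintu]
      _ ≤ ∫ x, |K x * Real.exp (2 * uj j x) - K x * Real.exp (2 * u x)| ∂μ := by
          simpa only [Real.norm_eq_abs] using
            norm_integral_le_integral_norm
              (fun x => K x * Real.exp (2 * uj j x) - K x * Real.exp (2 * u x)) (μ := μ)
      _ ≤ ∫ x, 2 * C' * (|f x| * g x) ∂μ := by
          refine integral_mono ((hKint j).sub hKintu).abs (hmul.const_mul _) fun x => hpt x
      _ = 2 * C' * ∫ x, |f x| * g x ∂μ := integral_const_mul _ _
      _ ≤ 2 * C' * (Real.sqrt (∫ x, (uj j x - u x) ^ 2 ∂μ) * Real.sqrt (∫ x, g x ^ 2 ∂μ)) := by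
          refine mul_le_mul_of_nonneg_left holder' (by positivity)
      _ ≤ 2 * C' * Real.sqrt (∫ x, (uj j x - u x) ^ 2 ∂μ) * Real.sqrt B := by
          rw [mul_assoc (2 * C')]
          refine mul_le_mul_of_nonneg_left ?_ (by positivity)
          exact mul_le_mul_of_nonneg_left (Real.sqrt_le_sqrt hg2B) (Real.sqrt_nonneg _)
  -- conclude by squeezing
  rw [← tendsto_sub_nhds_zero_iff]
  have hbound : Tendsto
      (fun j => 2 * C' * Real.sqrt (∫ x, (uj j x - u x) ^ 2 ∂μ) * Real.sqrt B)
      atTop (nhds 0) := by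
    have hsq : Tendsto (fun j => Real.sqrt (∫ x, (uj j x - u x) ^ 2 ∂μ))
        atTop (nhds 0) := by
      have := (Real.continuous_sqrt.tendsto 0).comp hL2
      simpa [Function.comp_def] using this
    have := (hsq.const_mul (2 * C')).mul_const (Real.sqrt B)
    simpa using this
  refine squeeze_zero_norm (fun j => ?_) hbound
  simpa only [Real.norm_eq_abs] using key j
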